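/- (Combes–Thomas estimate, discrete case) Let H₀ be a bounded self-adjoint operator on ℓ²(ℤ²) ⊗ ℂ^Q whose matrix elements satisfy |H₀(γ,x;γ',x')| ≤ C e^{−β₀‖γ−γ'‖}, and let K be a compact subset of the resolvent set of H₀. Then there exist C' > 0 and 0 < β < β₀ such that sup_{z∈K} |(H₀ − z)^{-1}(γ,x;γ',x')| ≤ C' e^{−β‖γ−γ'‖} for all γ, γ' ∈ ℤ², x, x' ∈ {1,…,Q}. -/

import Mathlib

/-- A norm on the lattice `ℤ²`. -/
noncomputable def znorm (γ : ℤ × ℤ) : ℝ := |(γ.1 : ℝ)| + |(γ.2 : ℝ)|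

/-- The Hilbert space `ℓ²(ℤ²) ⊗ ℂ^Q`. -/
noncomputable abbrev MagneticSpace (Q : ℕ) := lp (fun _ : (ℤ × ℤ) × Fin Q => ℂ) 2

/-- The canonical basis vector `δ_{γ,x}` of `ℓ²(ℤ²) ⊗ ℂ^Q`. -/
noncomputable def deltaVec (Q : ℕ) (γ : ℤ × ℤ) (x : Fin Q) : MagneticSpace Q :=
  lp.single 2 (γ, x) (1 : ℂ)

open scoped ENNReal
set_option maxHeartbeats 2000000
set_option linter.unusedSectionVars false

noncomputable section CTsec
namespace CTaux
variable {ι : Type*} [DecidableEq ι]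

/-! ### generic `ℓ²` facts -/

def evalCLM (i : ι) : lp (fun _ : ι => ℂ) 2 →L[ℂ] ℂ :=
  LinearMap.mkContinuous
    { toFun := fun f => f i
      map_add' := fun f g => by simp [lp.coeFn_add]
      map_smul' := fun c f => by simp [lp.coeFn_smul] }
    1 (fun f => by change ‖f i‖ ≤ 1 * ‖f‖; simpa using lp.norm_apply_le_norm (by norm_num) f i)

lemma tsum_cs (r f g : ι → ℝ) (hr0 : ∀ i, 0 ≤ r i) (hf0 : ∀ i, 0 ≤ f i) (hg0 : ∀ i, 0 ≤ g i)
    (hsq : ∀ i, r i ^ 2 = f i * g i) (hr : Summable r) (hf : Summable f) (hg : Summable g) :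
    (∑' i, r i) ^ 2 ≤ (∑' i, f i) * ∑' i, g i := by
  have h0f : (0:ℝ) ≤ ∑' i, f i := tsum_nonneg hf0
  have h0g : (0:ℝ) ≤ ∑' i, g i := tsum_nonneg hg0
  have key : ∑' i, r i ≤ Real.sqrt ((∑' i, f i) * ∑' i, g i) := by
    apply Summable.tsum_le_of_sum_le hr
    intro s
    rw [show Real.sqrt ((∑' i, f i) * ∑' i, g i) = ((∑' i, f i) * ∑' i, g i).sqrt from rfl,
      Real.le_sqrt (Finset.sum_nonneg fun i _ => hr0 i) (mul_nonneg h0f h0g)]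
    calc (∑ i ∈ s, r i) ^ 2 ≤ (∑ i ∈ s, f i) * ∑ i ∈ s, g i :=
          Finset.sum_sq_le_sum_mul_sum_of_sq_eq_mul s (fun i _ => hf0 i) (fun i _ => hg0 i)
            (fun i _ => hsq i)
      _ ≤ (∑' i, f i) * ∑' i, g i := by
          apply mul_le_mul (Summable.sum_le_tsum s (fun i _ => hf0 i) hf)
            (Summable.sum_le_tsum s (fun i _ => hg0 i) hg) (Finset.sum_nonneg fun i _ => hg0 i) h0f
  calc (∑' i, r i) ^ 2 ≤ Real.sqrt ((∑' i, f i) * ∑' i, g i) ^ 2 := by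
        apply pow_le_pow_left₀ (tsum_nonneg hr0) key
    _ = (∑' i, f i) * ∑' i, g i := Real.sq_sqrt (mul_nonneg h0f h0g)

lemma rpow_toReal_two (t : ℝ) : t ^ ((2:ℝ≥0∞).toReal) = t ^ (2:ℕ) := by
  rw [show ((2:ℝ≥0∞).toReal) = ((2:ℕ):ℝ) by norm_num, Real.rpow_natCast]

lemma norm_sq_eq_tsum (f : lp (fun _ : ι => ℂ) 2) : ‖f‖ ^ (2:ℕ) = ∑' i, ‖f i‖ ^ (2:ℕ) := by
  have := lp.norm_rpow_eq_tsum (p := 2) (by norm_num) f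
  rw [rpow_toReal_two] at this
  rw [this]
  congr 1; funext i; rw [rpow_toReal_two]

lemma summable_norm_sq (f : lp (fun _ : ι => ℂ) 2) : Summable fun i => ‖f i‖ ^ (2:ℕ) := by
  have := (lp.memℓp f).summable (p := 2) (by norm_num)
  refine this.congr fun i => ?_
  rw [rpow_toReal_two]

/-! ### Schur test -/

theorem schur_test (A : lp (fun _ : ι => ℂ) 2 →L[ℂ] lp (fun _ : ι => ℂ) 2)
    (k : ι → ι → ℝ) (S : ℝ) (hS : 0 ≤ S)
    (hk0 : ∀ i j, 0 ≤ k i j)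
    (hk : ∀ i j, ‖(A (lp.single 2 j 1) : ∀ _, ℂ) i‖ ≤ k i j)
    (hrow : ∀ i, Summable (k i)) (hrowS : ∀ i, (∑' j, k i j) ≤ S)
    (hcol : ∀ j, Summable (fun i => k i j)) (hcolS : ∀ j, (∑' i, k i j) ≤ S) :
    ‖A‖ ≤ S := by
  refine A.opNorm_le_bound hS fun x => ?_
  set a : ι → ℝ := fun j => ‖x j‖ with ha_def
  have ha0 : ∀ j, 0 ≤ a j := fun j => norm_nonneg _
  have haX : ∀ j, a j ≤ ‖x‖ := fun j => lp.norm_apply_le_norm (by norm_num) x j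
  have ha2 : Summable fun j => a j ^ (2:ℕ) := summable_norm_sq x
  have hcoord : ∀ i, HasSum (fun j => x j * (A (lp.single 2 j 1) : ∀ _, ℂ) i)
      ((A x : ∀ _, ℂ) i) := by
    intro i
    have hsingle : HasSum (fun j : ι => lp.single 2 j (x j)) x :=
      lp.hasSum_single (by norm_num) x
    have hAx : HasSum (fun j => A (lp.single 2 j (x j))) (A x) := A.hasSum hsingle
    have := (evalCLM i).hasSum hAx
    refine this.congr_fun fun j => ?_
    have h1 : lp.single (E := fun _ : ι => ℂ) 2 j (x j) = x j • lp.single 2 j 1 := by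
      rw [← lp.single_smul]
      norm_num
    rw [h1, map_smul, map_smul]
    simp [evalCLM, smul_eq_mul]
    left; rfl
  have hb : ∀ i, Summable (fun j => a j * k i j) := by
    intro i
    refine Summable.of_nonneg_of_le (fun j => mul_nonneg (ha0 j) (hk0 i j)) (fun j => ?_)
      ((hrow i).mul_left ‖x‖)
    exact mul_le_mul_of_nonneg_right (haX j) (hk0 i j)
  have hbi : ∀ i, ‖(A x : ∀ _, ℂ) i‖ ≤ ∑' j, a j * k i j := by
    intro i
    rw [← (hcoord i).tsum_eq]
    have hnorms : Summable fun j => ‖x j * (A (lp.single 2 j 1) : ∀ _, ℂ) i‖ := by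
      refine Summable.of_nonneg_of_le (fun j => norm_nonneg _) (fun j => ?_) (hb i)
      rw [norm_mul]
      exact mul_le_mul_of_nonneg_left (hk i j) (ha0 j)
    refine (norm_tsum_le_tsum_norm hnorms).trans ?_
    refine Summable.tsum_le_tsum (fun j => ?_) hnorms (hb i)
    rw [norm_mul]
    exact mul_le_mul_of_nonneg_left (hk i j) (ha0 j)
  set T : ι → ℝ := fun i => ∑' j, k i j * a j ^ (2:ℕ) with hT_def
  have hgi : ∀ i, Summable fun j => k i j * a j ^ (2:ℕ) := by
    intro i
    refine Summable.of_nonneg_of_le (fun j => mul_nonneg (hk0 i j) (by positivity))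
      (fun j => ?_) ((hrow i).mul_right (‖x‖ ^ (2:ℕ)))
    exact mul_le_mul_of_nonneg_left (pow_le_pow_left₀ (ha0 j) (haX j) 2) (hk0 i j)
  have hT0 : ∀ i, 0 ≤ T i := fun i => tsum_nonneg fun j => mul_nonneg (hk0 i j) (by positivity)
  have hcs : ∀ i, (∑' j, a j * k i j) ^ (2:ℕ) ≤ S * T i := by
    intro i
    have := tsum_cs (fun j => a j * k i j) (k i) (fun j => k i j * a j ^ (2:ℕ))
      (fun j => mul_nonneg (ha0 j) (hk0 i j)) (hk0 i)
      (fun j => mul_nonneg (hk0 i j) (by positivity))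
      (fun j => by ring) (hb i) (hrow i) (hgi i)
    refine this.trans ?_
    exact mul_le_mul_of_nonneg_right (hrowS i) (hT0 i)
  have hFnn : ∀ p : ι × ι, 0 ≤ k p.2 p.1 * a p.1 ^ (2:ℕ) :=
    fun p => mul_nonneg (hk0 p.2 p.1) (by positivity)
  have hF : Summable (fun p : ι × ι => k p.2 p.1 * a p.1 ^ (2:ℕ)) := by
    refine (summable_prod_of_nonneg hFnn).mpr ⟨fun j => (hcol j).mul_right (a j ^ (2:ℕ)), ?_⟩
    refine Summable.of_nonneg_of_le (fun j => tsum_nonneg fun i => hFnn (j, i)) (fun j => ?_)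
      (ha2.mul_left S)
    have : ∑' i, k i j * a j ^ (2:ℕ) = (∑' i, k i j) * a j ^ (2:ℕ) := tsum_mul_right
    rw [this]
    exact mul_le_mul_of_nonneg_right (hcolS j) (by positivity)
  have hG : Summable (fun p : ι × ι => k p.1 p.2 * a p.2 ^ (2:ℕ)) := by
    have := hF.prod_symm
    exact this.congr fun p => rfl
  have hT_sum : Summable T := by
    have := ((summable_prod_of_nonneg (fun p : ι × ι => hFnn p.swap)).mp hG).2
    exact this.congr fun i => rfl
  have hTsum_le : ∑' i, T i ≤ S * ∑' j, a j ^ (2:ℕ) := by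
    have h1 : ∑' i, T i = ∑' p : ι × ι, k p.1 p.2 * a p.2 ^ (2:ℕ) :=
      (Summable.tsum_prod' hG (fun b => (hgi b))).symm
    have h2 : ∑' p : ι × ι, k p.1 p.2 * a p.2 ^ (2:ℕ)
        = ∑' j, ∑' i, k i j * a j ^ (2:ℕ) := by
      rw [← Summable.tsum_prod' hF (fun b => (hcol b).mul_right (a b ^ (2:ℕ)))]
      exact ((Equiv.prodComm ι ι).tsum_eq _).symm
    rw [h1, h2]
    have h3 : ∀ j, ∑' i, k i j * a j ^ (2:ℕ) = (∑' i, k i j) * a j ^ (2:ℕ) :=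
      fun j => tsum_mul_right
    calc ∑' j, ∑' i, k i j * a j ^ (2:ℕ) ≤ ∑' j, S * a j ^ (2:ℕ) := by
          refine Summable.tsum_le_tsum (fun j => ?_) ?_ (ha2.mul_left S)
          · rw [h3 j]
            exact mul_le_mul_of_nonneg_right (hcolS j) (by positivity)
          · refine Summable.of_nonneg_of_le (fun j => tsum_nonneg fun i => hFnn (j, i))
              (fun j => ?_) (ha2.mul_left S)
            rw [h3 j]
            exact mul_le_mul_of_nonneg_right (hcolS j) (by positivity)
      _ = S * ∑' j, a j ^ (2:ℕ) := tsum_mul_left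
  have hfinal : ‖A x‖ ^ (2:ℕ) ≤ (S * ‖x‖) ^ (2:ℕ) := by
    rw [norm_sq_eq_tsum]
    have hsumAx : Summable fun i => ‖(A x : ∀ _, ℂ) i‖ ^ (2:ℕ) := summable_norm_sq (A x)
    have hmid : Summable fun i => (∑' j, a j * k i j) ^ (2:ℕ) := by
      refine Summable.of_nonneg_of_le (fun i => by positivity) (fun i => hcs i)
        (hT_sum.mul_left S)
    calc ∑' i, ‖(A x : ∀ _, ℂ) i‖ ^ (2:ℕ)
        ≤ ∑' i, (∑' j, a j * k i j) ^ (2:ℕ) := by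
          refine Summable.tsum_le_tsum (fun i => ?_) hsumAx hmid
          exact pow_le_pow_left₀ (norm_nonneg _) (hbi i) 2
      _ ≤ ∑' i, S * T i := Summable.tsum_le_tsum hcs hmid (hT_sum.mul_left S)
      _ = S * ∑' i, T i := tsum_mul_left
      _ ≤ S * (S * ∑' j, a j ^ (2:ℕ)) := mul_le_mul_of_nonneg_left hTsum_le hS
      _ = (S * ‖x‖) ^ (2:ℕ) := by
          have hx2 := norm_sq_eq_tsum (f := x)
          simp only [ha_def]
          rw [← hx2]; ring
  exact le_of_pow_le_pow_left₀ (by norm_num) (by positivity) hfinal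

/-! ### multiplication operators -/

lemma memℓp_mul (w : ι → ℂ) (Cw : ℝ) (hCw : 0 ≤ Cw) (hw : ∀ i, ‖w i‖ ≤ Cw)
    (x : lp (fun _ : ι => ℂ) 2) :
    Memℓp (fun i => w i * x i) 2 := by
  apply memℓp_gen
  have hx : Summable fun i => ‖x i‖ ^ (2:ℝ≥0∞).toReal := (lp.memℓp x).summable (by norm_num)
  refine Summable.of_nonneg_of_le (fun i => by positivity) (fun i => ?_)
    (hx.mul_left (Cw ^ (2:ℝ≥0∞).toReal))
  have h0 : (0:ℝ) ≤ ‖x i‖ := norm_nonneg _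
  calc ‖w i * x i‖ ^ (2:ℝ≥0∞).toReal = (‖w i‖ * ‖x i‖) ^ (2:ℝ≥0∞).toReal := by rw [norm_mul]
    _ ≤ (Cw * ‖x i‖) ^ (2:ℝ≥0∞).toReal := by
        apply Real.rpow_le_rpow (by positivity) (mul_le_mul_of_nonneg_right (hw i) h0)
        norm_num
    _ = Cw ^ (2:ℝ≥0∞).toReal * ‖x i‖ ^ (2:ℝ≥0∞).toReal := Real.mul_rpow hCw h0

def mulOp (w : ι → ℂ) (Cw : ℝ) (hCw : 0 ≤ Cw) (hw : ∀ i, ‖w i‖ ≤ Cw) :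
    lp (fun _ : ι => ℂ) 2 →L[ℂ] lp (fun _ : ι => ℂ) 2 :=
  LinearMap.mkContinuous
    { toFun := fun x => ⟨fun i => w i * x i, memℓp_mul w Cw hCw hw x⟩
      map_add' := fun f g => by
        apply lp.ext; funext i
        change w i * (f + g) i = _
        rw [lp.coeFn_add]
        change _ = w i * f i + w i * g i
        simp [mul_add]
      map_smul' := fun c f => by
        apply lp.ext; funext i
        change w i * (c • f) i = _
        rw [lp.coeFn_smul]
        change _ = c • (w i * f i)
        simp [Pi.smul_apply, smul_eq_mul]
        ring }
    Cw
    (by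
      intro x
      change ‖(⟨fun i => w i * x i, _⟩ : lp (fun _ : ι => ℂ) 2)‖ ≤ Cw * ‖x‖
      have htr : (0:ℝ) < (2:ℝ≥0∞).toReal := by norm_num
      rw [← Real.rpow_le_rpow_iff (norm_nonneg _) (by positivity) htr]
      rw [lp.norm_rpow_eq_tsum htr]
      have hx : Summable fun i => ‖x i‖ ^ (2:ℝ≥0∞).toReal := (lp.memℓp x).summable htr
      have h1 : ∀ i, ‖(fun i => w i * x i) i‖ ^ (2:ℝ≥0∞).toReal
          ≤ Cw ^ (2:ℝ≥0∞).toReal * ‖x i‖ ^ (2:ℝ≥0∞).toReal := by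
        intro i
        calc ‖w i * x i‖ ^ (2:ℝ≥0∞).toReal = (‖w i‖ * ‖x i‖) ^ (2:ℝ≥0∞).toReal := by
              rw [norm_mul]
          _ ≤ (Cw * ‖x i‖) ^ (2:ℝ≥0∞).toReal := by
              apply Real.rpow_le_rpow (by positivity)
                (mul_le_mul_of_nonneg_right (hw i) (norm_nonneg _))
              norm_num
          _ = Cw ^ (2:ℝ≥0∞).toReal * ‖x i‖ ^ (2:ℝ≥0∞).toReal :=
              Real.mul_rpow hCw (norm_nonneg _)
      calc (∑' i, ‖(fun i => w i * x i) i‖ ^ (2:ℝ≥0∞).toReal)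
          ≤ ∑' i, Cw ^ (2:ℝ≥0∞).toReal * ‖x i‖ ^ (2:ℝ≥0∞).toReal := by
            apply Summable.tsum_le_tsum h1
            · exact Summable.of_nonneg_of_le (fun i => by positivity) h1
                (hx.mul_left _)
            · exact hx.mul_left _
        _ = Cw ^ (2:ℝ≥0∞).toReal * ∑' i, ‖x i‖ ^ (2:ℝ≥0∞).toReal := tsum_mul_left
        _ = Cw ^ (2:ℝ≥0∞).toReal * ‖x‖ ^ (2:ℝ≥0∞).toReal := by
            rw [lp.norm_rpow_eq_tsum htr]
        _ = (Cw * ‖x‖) ^ (2:ℝ≥0∞).toReal := (Real.mul_rpow hCw (norm_nonneg _)).symm)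

lemma mulOp_apply (w : ι → ℂ) (Cw : ℝ) (hCw : 0 ≤ Cw) (hw : ∀ i, ‖w i‖ ≤ Cw)
    (x : lp (fun _ : ι => ℂ) 2) (i : ι) : (mulOp w Cw hCw hw x : ∀ _, ℂ) i = w i * x i := rfl

lemma mulOp_single (w : ι → ℂ) (Cw : ℝ) (hCw : 0 ≤ Cw) (hw : ∀ i, ‖w i‖ ≤ Cw)
    (j : ι) (c : ℂ) :
    mulOp w Cw hCw hw (lp.single 2 j c) = w j • lp.single 2 j c := by
  apply lp.ext; funext i
  rw [lp.coeFn_smul, Pi.smul_apply]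
  rw [mulOp_apply]
  by_cases h : i = j
  · subst h
    rw [lp.single_apply_self, smul_eq_mul]
  · rw [lp.single_apply_ne (E := fun _ : ι => ℂ) 2 j c h, smul_eq_mul, mul_zero, mul_zero]

lemma mulOp_mul_eq_one (w w' : ι → ℂ) (Cw Cw' : ℝ) (hCw : 0 ≤ Cw) (hCw' : 0 ≤ Cw')
    (hw : ∀ i, ‖w i‖ ≤ Cw) (hw' : ∀ i, ‖w' i‖ ≤ Cw') (h : ∀ i, w i * w' i = 1) :
    mulOp w Cw hCw hw * mulOp w' Cw' hCw' hw' = 1 := by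
  apply ContinuousLinearMap.ext; intro x
  apply lp.ext; funext i
  rw [ContinuousLinearMap.mul_apply, mulOp_apply, mulOp_apply, ← mul_assoc, h i, one_mul]
  rfl

/-! ### znorm facts -/

lemma znorm_nonneg (γ : ℤ × ℤ) : 0 ≤ znorm γ := by
  unfold znorm; positivity

lemma znorm_zero : znorm 0 = 0 := by simp [znorm]

lemma znorm_neg (γ : ℤ × ℤ) : znorm (-γ) = znorm γ := by
  unfold znorm; simp [abs_neg]

lemma znorm_sub_comm (a b : ℤ × ℤ) : znorm (a - b) = znorm (b - a) := by
  rw [← znorm_neg (a - b), neg_sub]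

lemma znorm_triangle (a b : ℤ × ℤ) : znorm (a + b) ≤ znorm a + znorm b := by
  unfold znorm
  have h1 := abs_add_le ((a.1 : ℝ)) ((b.1 : ℝ))
  have h2 := abs_add_le ((a.2 : ℝ)) ((b.2 : ℝ))
  simp only [Prod.fst_add, Prod.snd_add]
  push_cast
  linarith

lemma znorm_sub_le (a b c : ℤ × ℤ) : znorm (a - c) ≤ znorm (a - b) + znorm (b - c) := by
  have : a - c = (a - b) + (b - c) := by ring
  rw [this]; exact znorm_triangle _ _

lemma abs_znorm_sub (a b γ₀ : ℤ × ℤ) : |znorm (a - γ₀) - znorm (b - γ₀)| ≤ znorm (a - b) := by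
  rw [abs_le]
  constructor
  · have := znorm_sub_le b a γ₀
    rw [znorm_sub_comm b a] at this
    linarith
  · have := znorm_sub_le a b γ₀
    linarith

lemma abs_min_sub_min (a b n : ℝ) : |min a n - min b n| ≤ |a - b| := by
  rw [abs_le]
  constructor <;> simp only [min_def] <;> split_ifs <;>
    linarith [le_abs_self (a - b), neg_abs_le (a - b)]

/-! ### summability over ℤ² -/

lemma summable_exp_int (c : ℝ) (hc : 0 < c) :
    Summable fun n : ℤ => Real.exp (-c * |(n : ℝ)|) := by
  have hgeo : Summable fun n : ℕ => Real.exp (-c) ^ n :=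
    summable_geometric_of_lt_one (Real.exp_nonneg _) (by
      rw [Real.exp_lt_one_iff]; linarith)
  have hnat : Summable fun n : ℕ => Real.exp (-c * |((n : ℤ) : ℝ)|) := by
    refine hgeo.congr fun n => ?_
    rw [← Real.exp_nat_mul]
    congr 1
    push_cast
    rw [abs_of_nonneg (by positivity)]
    ring
  refine Summable.of_nat_of_neg_add_one hnat ?_
  refine hgeo.mul_left (Real.exp (-c)) |>.congr fun n => ?_
  rw [← Real.exp_nat_mul, ← Real.exp_add]
  congr 1
  push_cast
  rw [abs_of_nonpos (by push_cast; linarith)]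
  push_cast
  ring

lemma summable_exp_znorm (c : ℝ) (hc : 0 < c) :
    Summable fun γ : ℤ × ℤ => Real.exp (-c * znorm γ) := by
  have := (summable_exp_int c hc).mul_of_nonneg (summable_exp_int c hc)
    (g := fun n : ℤ => Real.exp (-c * |(n : ℝ)|))
    (fun n => Real.exp_nonneg _) (fun n => Real.exp_nonneg _)
  refine this.congr fun γ => ?_
  rw [← Real.exp_add]
  unfold znorm
  congr 1
  ring

lemma summable_znorm_exp (c : ℝ) (hc : 0 < c) :
    Summable fun γ : ℤ × ℤ => znorm γ * Real.exp (-c * znorm γ) := by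
  refine Summable.of_nonneg_of_le
    (fun γ => mul_nonneg (znorm_nonneg γ) (Real.exp_nonneg _)) (fun γ => ?_)
    ((summable_exp_znorm (c/2) (by linarith)).mul_left (2 / c))
  set t := znorm γ with ht
  have h0t : 0 ≤ t := znorm_nonneg γ
  have key : t ≤ (2 / c) * Real.exp ((c / 2) * t) := by
    have := Real.add_one_le_exp ((c / 2) * t)
    have h1 : (c / 2) * t ≤ Real.exp ((c / 2) * t) := by linarith
    have h2 : (0:ℝ) < 2 / c := by positivity
    calc t = (2 / c) * ((c / 2) * t) := by field_simp
      _ ≤ (2 / c) * Real.exp ((c / 2) * t) :=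
          mul_le_mul_of_nonneg_left h1 (le_of_lt h2)
  calc t * Real.exp (-c * t) ≤ ((2 / c) * Real.exp ((c / 2) * t)) * Real.exp (-c * t) :=
        mul_le_mul_of_nonneg_right key (Real.exp_nonneg _)
    _ = (2 / c) * Real.exp (-(c / 2) * t) := by
        rw [mul_assoc, ← Real.exp_add]
        congr 2
        ring

lemma summable_fst (Q : ℕ) (g : ℤ × ℤ → ℝ) (hg0 : ∀ v, 0 ≤ g v) (hg : Summable g) :
    Summable (fun j : (ℤ × ℤ) × Fin Q => g j.1) ∧
      ∑' j : (ℤ × ℤ) × Fin Q, g j.1 = Q * ∑' v, g v := by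
  have hrows : ∀ γ' : ℤ × ℤ, Summable fun _ : Fin Q => g γ' := fun γ' => .of_finite
  have htsum_fin : ∀ γ' : ℤ × ℤ, ∑' _ : Fin Q, g γ' = Q * g γ' := by
    intro γ'
    rw [tsum_const]
    simp [nsmul_eq_mul]
  have hsums : Summable fun γ' : ℤ × ℤ => ∑' _ : Fin Q, g γ' := by
    refine (hg.mul_left (Q : ℝ)).congr fun γ' => ?_
    rw [htsum_fin]
  have hs : Summable (fun j : (ℤ × ℤ) × Fin Q => g j.1) := by
    refine (summable_prod_of_nonneg (fun p => hg0 p.1)).mpr ⟨fun γ' => hrows γ', hsums⟩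
  refine ⟨hs, ?_⟩
  rw [Summable.tsum_prod' hs (fun γ' => hrows γ')]
  calc ∑' (γ' : ℤ × ℤ) (_ : Fin Q), g γ' = ∑' γ' : ℤ × ℤ, (Q : ℝ) * g γ' := by
        congr 1; funext γ'; exact htsum_fin γ'
    _ = Q * ∑' v, g v := tsum_mul_left

/-! ### elementary inequality -/

lemma abs_exp_sub_one_le (u : ℝ) : |Real.exp u - 1| ≤ |u| * Real.exp |u| := by
  rcases le_or_gt 0 u with hu | hu
  · rw [abs_of_nonneg hu, abs_of_nonneg (by linarith [Real.one_le_exp hu])]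
    have h1 := Real.add_one_le_exp (-u)
    have h2 : Real.exp (-u) = (Real.exp u)⁻¹ := Real.exp_neg u
    have h3 : Real.exp u * (Real.exp u)⁻¹ = 1 := mul_inv_cancel₀ (Real.exp_ne_zero u)
    nlinarith [Real.exp_pos u]
  · rw [abs_of_neg hu, abs_of_nonpos (by linarith [Real.exp_lt_one_iff.mpr hu])]
    have h1 := Real.add_one_le_exp u
    have h2 : (1:ℝ) ≤ Real.exp (-u) := Real.one_le_exp (by linarith)
    nlinarith

/-! ### Neumann perturbation and resolvent bound -/

variable {A : Type*} [NormedRing A] [CompleteSpace A]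

lemma perturb_unit (hone : ‖(1:A)‖ ≤ 1) (U : Aˣ) (b : A)
    (hb : ‖b‖ * ‖((U⁻¹ : Aˣ) : A)‖ ≤ 1/2) :
    ∃ P : Aˣ, (P : A) = (U : A) + b ∧ ‖((P⁻¹ : Aˣ) : A)‖ ≤ 2 * ‖((U⁻¹ : Aˣ) : A)‖ := by
  set t : A := -(((U⁻¹ : Aˣ) : A) * b) with ht_def
  have ht : ‖t‖ ≤ 1/2 := by
    rw [ht_def, norm_neg]
    calc ‖((U⁻¹ : Aˣ) : A) * b‖ ≤ ‖((U⁻¹ : Aˣ) : A)‖ * ‖b‖ := norm_mul_le _ _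
      _ = ‖b‖ * ‖((U⁻¹ : Aˣ) : A)‖ := mul_comm _ _
      _ ≤ 1/2 := hb
  have ht1 : ‖t‖ < 1 := lt_of_le_of_lt ht (by norm_num)
  set S : Aˣ := Units.oneSub t ht1 with hS_def
  have hSval : (S : A) = 1 - t := rfl
  have hSinv : ‖((S⁻¹ : Aˣ) : A)‖ ≤ 2 := by
    set x : A := ((S⁻¹ : Aˣ) : A) with hx_def
    have hmul : (1 - t) * x = 1 := by
      rw [← hSval]; exact S.mul_inv
    have hx1 : x = 1 + t * x := by
      have : x - t * x = 1 := by
        calc x - t * x = (1 - t) * x := by rw [sub_mul, one_mul]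
          _ = 1 := hmul
      rw [← this]; abel
    have hxb : ‖x‖ ≤ ‖(1:A)‖ + ‖t‖ * ‖x‖ := by
      calc ‖x‖ = ‖1 + t * x‖ := by rw [← hx1]
        _ ≤ ‖(1:A)‖ + ‖t * x‖ := norm_add_le _ _
        _ ≤ ‖(1:A)‖ + ‖t‖ * ‖x‖ := by linarith [norm_mul_le t x]
    nlinarith [norm_nonneg x]
  refine ⟨U * S, ?_, ?_⟩
  · have e1 : ((U * S : Aˣ) : A) = (U : A) * (1 - t) := by rw [Units.val_mul, hSval]
    have e2 : (U : A) * (1 - t) = (U : A) + (U : A) * (((U⁻¹ : Aˣ) : A) * b) := by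
      rw [ht_def, mul_sub, mul_one, mul_neg, sub_neg_eq_add]
    have e3 : (U : A) * (((U⁻¹ : Aˣ) : A) * b) = b := by
      rw [← mul_assoc, U.mul_inv, one_mul]
    rw [e1, e2, e3]
  · have e1 : (((U * S)⁻¹ : Aˣ) : A) = ((S⁻¹ : Aˣ) : A) * ((U⁻¹ : Aˣ) : A) := by
      rw [mul_inv_rev, Units.val_mul]
    rw [e1]
    have e2 : ‖((S⁻¹ : Aˣ) : A) * ((U⁻¹ : Aˣ) : A)‖ ≤ ‖((S⁻¹ : Aˣ) : A)‖ * ‖((U⁻¹ : Aˣ) : A)‖ :=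
      norm_mul_le _ _
    have e3 : ‖((S⁻¹ : Aˣ) : A)‖ * ‖((U⁻¹ : Aˣ) : A)‖ ≤ 2 * ‖((U⁻¹ : Aˣ) : A)‖ :=
      mul_le_mul_of_nonneg_right hSinv (norm_nonneg _)
    linarith

variable [NormedAlgebra ℂ A]

lemma isUnit_res (H₀ : A) (z : ℂ) (hz : z ∉ spectrum ℂ H₀) : IsUnit (H₀ - z • (1 : A)) := by
  have h1 : IsUnit (algebraMap ℂ A z - H₀) := by
    by_contra h
    exact hz (spectrum.mem_iff.mpr h)
  have h2 : H₀ - z • (1 : A) = -(algebraMap ℂ A z - H₀) := by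
    rw [Algebra.algebraMap_eq_smul_one, neg_sub]
  rw [h2]
  exact h1.neg

lemma resolvent_bound (H₀ : A) (K : Set ℂ) (hK : IsCompact K)
    (hres : ∀ z ∈ K, z ∉ spectrum ℂ H₀) :
    ∃ M : ℝ, 1 ≤ M ∧ ∀ z ∈ K, ‖Ring.inverse (H₀ - z • (1 : A))‖ ≤ M := by
  have hcont : ContinuousOn (fun z : ℂ => Ring.inverse (H₀ - z • (1 : A))) K := by
    intro z hz
    obtain ⟨u, hu'⟩ := isUnit_res H₀ z (hres z hz)
    have h1 : ContinuousAt (fun z : ℂ => H₀ - z • (1 : A)) z := by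
      apply ContinuousAt.sub continuousAt_const
      exact (continuous_id.smul continuous_const).continuousAt
    have h2 : ContinuousAt (Ring.inverse : A → A) (H₀ - z • (1 : A)) := by
      rw [← hu']
      exact NormedRing.inverse_continuousAt u
    have h3 : ContinuousAt (fun z : ℂ => Ring.inverse (H₀ - z • (1 : A))) z :=
      ContinuousAt.comp (g := (Ring.inverse : A → A)) h2 h1
    exact h3.continuousWithinAt
  obtain ⟨M₀, hM₀⟩ := hK.exists_bound_of_continuousOn hcont
  exact ⟨max M₀ 1, le_max_right _ _, fun z hz => (hM₀ z hz).trans (le_max_left _ _)⟩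

end CTaux
end CTsec

namespace CTaux

lemma inner_delta (Q : ℕ) (γ : ℤ × ℤ) (x : Fin Q) (v : MagneticSpace Q) :
    (inner ℂ (deltaVec Q γ x) v : ℂ) = (v : ∀ _ : (ℤ × ℤ) × Fin Q, ℂ) (γ, x) := by
  rw [deltaVec, lp.inner_single_left]
  simp [RCLike.inner_apply]

end CTaux


/-- **Combes–Thomas estimate, discrete case.** If the bounded
self-adjoint operator `H₀` on `ℓ²(ℤ²) ⊗ ℂ^Q` has matrix elements bounded by
`C e^{−β₀‖γ−γ'‖}`, and `K` is a compact subset of its resolvent set, then there are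
`C' > 0` and `0 < β < β₀` with
`sup_{z ∈ K} |(H₀ − z)⁻¹(γ,x;γ',x')| ≤ C' e^{−β‖γ−γ'‖}`. -/
theorem combes_thomas_discrete (Q : ℕ) (C β₀ : ℝ) (hβ₀ : 0 < β₀)
    (H₀ : MagneticSpace Q →L[ℂ] MagneticSpace Q)
    (hsa : IsSelfAdjoint H₀)
    (hbound : ∀ (γ γ' : ℤ × ℤ) (x x' : Fin Q),
      ‖(inner ℂ (deltaVec Q γ x) (H₀ (deltaVec Q γ' x')) : ℂ)‖ ≤
        C * Real.exp (-β₀ * znorm (γ - γ')))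
    (K : Set ℂ) (hK : IsCompact K)
    (hres : ∀ z ∈ K, z ∉ spectrum ℂ H₀) :
    ∃ C' > (0 : ℝ), ∃ β : ℝ, 0 < β ∧ β < β₀ ∧
      ∀ z ∈ K, ∀ (γ γ' : ℤ × ℤ) (x x' : Fin Q),
        ‖(inner ℂ (deltaVec Q γ x)
              (Ring.inverse (H₀ - z • (1 : MagneticSpace Q →L[ℂ] MagneticSpace Q))
                (deltaVec Q γ' x')) : ℂ)‖ ≤
          C' * Real.exp (-β * znorm (γ - γ')) := by
  
  classical
  rcases Nat.eq_zero_or_pos Q with hQ | hQ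
  · subst hQ
    exact ⟨1, one_pos, β₀/2, by linarith, by linarith, fun z hz γ γ' x x' => x.elim0⟩
  -- C is nonnegative
  have hC : 0 ≤ C := by
    have x0 : Fin Q := ⟨0, hQ⟩
    have h := hbound 0 0 x0 x0
    rw [sub_self, CTaux.znorm_zero, mul_zero, Real.exp_zero, mul_one] at h
    exact le_trans (norm_nonneg _) h
  -- resolvent bound on K
  obtain ⟨M, hM1, hM⟩ := CTaux.resolvent_bound H₀ K hK hres
  have hM0 : (0:ℝ) < M := lt_of_lt_of_le one_pos hM1
  -- constants
  set Sig0 : ℝ := ∑' v : ℤ × ℤ, znorm v * Real.exp (-(β₀/2) * znorm v) with hSig0def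
  have hSig0nn : 0 ≤ Sig0 :=
    tsum_nonneg fun v => mul_nonneg (CTaux.znorm_nonneg v) (Real.exp_nonneg _)
  set Sigt : ℝ := (Q : ℝ) * (C * Sig0) with hSigtdef
  have hSigtnn : 0 ≤ Sigt := by positivity
  set β : ℝ := min (β₀/2) ((1/(2*M)) * (1/(Sigt+1))) with hβdef
  have hβpos : 0 < β := lt_min (by linarith) (by positivity)
  have hβle : β ≤ β₀/2 := min_le_left _ _
  have hβnn : 0 ≤ β := le_of_lt hβpos
  have hkey : β * Sigt ≤ 1/(2*M) := by
    have h1 : β ≤ (1/(2*M)) * (1/(Sigt+1)) := min_le_right _ _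
    have h2 : (1/(Sigt+1)) * Sigt ≤ 1 := by
      rw [one_div, inv_mul_le_iff₀ (by linarith)]
      nlinarith
    calc β * Sigt ≤ ((1/(2*M)) * (1/(Sigt+1))) * Sigt :=
          mul_le_mul_of_nonneg_right h1 hSigtnn
      _ = (1/(2*M)) * ((1/(Sigt+1)) * Sigt) := by ring
      _ ≤ (1/(2*M)) * 1 := mul_le_mul_of_nonneg_left h2 (by positivity)
      _ = 1/(2*M) := mul_one _
  refine ⟨2*M, by positivity, β, hβpos, lt_of_le_of_lt hβle (by linarith), ?_⟩
  intro z hz γ γ' x x'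
  -- the resolvent as a unit
  have hu : IsUnit (H₀ - z • (1 : MagneticSpace Q →L[ℂ] MagneticSpace Q)) :=
    CTaux.isUnit_res H₀ z (hres z hz)
  set u : MagneticSpace Q →L[ℂ] MagneticSpace Q := H₀ - z • 1 with hudef
  set R : MagneticSpace Q →L[ℂ] MagneticSpace Q := Ring.inverse u with hRdef
  set U : (MagneticSpace Q →L[ℂ] MagneticSpace Q)ˣ := hu.unit with hUdef
  have hUval : (U : MagneticSpace Q →L[ℂ] MagneticSpace Q) = u := hu.unit_spec
  have hRinv : R = ((U⁻¹ : _ˣ) : MagneticSpace Q →L[ℂ] MagneticSpace Q) := by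
    rw [hRdef, ← hUval, Ring.inverse_unit]
  have hRnorm : ‖R‖ ≤ M := hM z hz
  have hUinv_norm : ‖((U⁻¹ : _ˣ) : MagneticSpace Q →L[ℂ] MagneticSpace Q)‖ ≤ M := by
    rw [← hRinv]; exact hRnorm
  -- weights
  set n : ℝ := znorm (γ - γ') with hndef
  have hn0 : 0 ≤ n := CTaux.znorm_nonneg _
  set f : ℤ × ℤ → ℝ := fun v => min (znorm (v - γ')) n with hfdef
  have hf0 : ∀ v, 0 ≤ f v := fun v => le_min (CTaux.znorm_nonneg _) hn0
  have hfn : ∀ v, f v ≤ n := fun v => min_le_right _ _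
  have hflip : ∀ v w : ℤ × ℤ, |f v - f w| ≤ znorm (v - w) := by
    intro v w
    exact le_trans (CTaux.abs_min_sub_min _ _ n) (CTaux.abs_znorm_sub v w γ')
  set wp : (ℤ × ℤ) × Fin Q → ℂ := fun i => ((Real.exp (β * f i.1) : ℝ) : ℂ) with hwpdef
  set wm : (ℤ × ℤ) × Fin Q → ℂ := fun i => ((Real.exp (-(β * f i.1)) : ℝ) : ℂ) with hwmdef
  have hwp_bound : ∀ i, ‖wp i‖ ≤ Real.exp (β * n) := by
    intro i
    rw [hwpdef]
    simp only [Complex.norm_real, Real.norm_eq_abs, Real.abs_exp]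
    exact Real.exp_le_exp.mpr (mul_le_mul_of_nonneg_left (hfn i.1) hβnn)
  have hwm_bound : ∀ i, ‖wm i‖ ≤ (1:ℝ) := by
    intro i
    rw [hwmdef]
    simp only [Complex.norm_real, Real.norm_eq_abs, Real.abs_exp]
    rw [Real.exp_le_one_iff]
    have := mul_nonneg hβnn (hf0 i.1)
    linarith
  set Wp := CTaux.mulOp wp (Real.exp (β * n)) (Real.exp_nonneg _) hwp_bound with hWpdef
  set Wm := CTaux.mulOp wm 1 zero_le_one hwm_bound with hWmdef
  have hwpm : ∀ i, wp i * wm i = 1 := by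
    intro i
    rw [hwpdef, hwmdef]
    rw [← Complex.ofReal_mul, ← Real.exp_add, add_neg_cancel, Real.exp_zero, Complex.ofReal_one]
  have hwmp : ∀ i, wm i * wp i = 1 := fun i => by rw [mul_comm]; exact hwpm i
  have hWpWm : Wp * Wm = 1 := CTaux.mulOp_mul_eq_one _ _ _ _ _ _ _ _ hwpm
  have hWmWp : Wm * Wp = 1 := CTaux.mulOp_mul_eq_one _ _ _ _ _ _ _ _ hwmp
  -- the conjugation error operator
  set B := Wp * H₀ * Wm - H₀ with hBdef
  -- matrix elements of B
  have hH0coord : ∀ i j : (ℤ × ℤ) × Fin Q,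
      ‖(H₀ (lp.single 2 j 1) : ∀ _, ℂ) i‖ ≤ C * Real.exp (-β₀ * znorm (i.1 - j.1)) := by
    intro i j
    have h := hbound i.1 j.1 i.2 j.2
    rw [CTaux.inner_delta] at h
    simpa [deltaVec, Prod.mk.eta] using h
  set Fk : ℤ × ℤ → ℝ := fun v => β * (C * (znorm v * Real.exp (-(β₀/2) * znorm v))) with hFkdef
  have hFk0 : ∀ v, 0 ≤ Fk v := fun v => by
    rw [hFkdef]
    have := CTaux.znorm_nonneg v
    positivity
  have hFksum : Summable Fk :=
    ((CTaux.summable_znorm_exp (β₀/2) (by linarith)).mul_left C).mul_left β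
  have hBcoord : ∀ i j : (ℤ × ℤ) × Fin Q,
      ‖(B (lp.single 2 j 1) : ∀ _, ℂ) i‖ ≤ Fk (i.1 - j.1) := by
    intro i j
    set d : ℝ := znorm (i.1 - j.1) with hddef
    have hd0 : 0 ≤ d := CTaux.znorm_nonneg _
    have hBval : (B (lp.single 2 j 1) : ∀ _, ℂ) i
        = (((Real.exp (β * (f i.1 - f j.1)) : ℝ) : ℂ) - 1) *
          (H₀ (lp.single 2 j 1) : ∀ _, ℂ) i := by
      rw [hBdef]
      rw [ContinuousLinearMap.sub_apply]
      rw [lp.coeFn_sub, Pi.sub_apply]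
      rw [ContinuousLinearMap.mul_apply, ContinuousLinearMap.mul_apply]
      rw [hWmdef, CTaux.mulOp_single, map_smul]
      rw [hWpdef, CTaux.mulOp_apply, lp.coeFn_smul, Pi.smul_apply, smul_eq_mul]
      have : wp i * (wm j * (H₀ (lp.single 2 j 1) : ∀ _, ℂ) i)
          = (wp i * wm j) * (H₀ (lp.single 2 j 1) : ∀ _, ℂ) i := by ring
      rw [this]
      have hww : wp i * wm j = ((Real.exp (β * (f i.1 - f j.1)) : ℝ) : ℂ) := by
        rw [hwpdef, hwmdef, ← Complex.ofReal_mul, ← Real.exp_add]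
        congr 2
        ring
      rw [hww]
      ring
    rw [hBval, norm_mul]
    have h1 : ‖(((Real.exp (β * (f i.1 - f j.1)) : ℝ) : ℂ) - 1)‖
        = |Real.exp (β * (f i.1 - f j.1)) - 1| := by
      rw [← Complex.ofReal_one, ← Complex.ofReal_sub, Complex.norm_real, Real.norm_eq_abs]
    rw [h1]
    set uu : ℝ := β * (f i.1 - f j.1) with huudef
    have huu : |uu| ≤ β * d := by
      rw [huudef, abs_mul, abs_of_nonneg hβnn]
      exact mul_le_mul_of_nonneg_left (hflip i.1 j.1) hβnn
    have h2 : |Real.exp uu - 1| ≤ (β * d) * Real.exp (β * d) := by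
      refine (CTaux.abs_exp_sub_one_le uu).trans ?_
      exact mul_le_mul huu (Real.exp_le_exp.mpr huu) (Real.exp_nonneg _)
        (by positivity)
    calc |Real.exp uu - 1| * ‖(H₀ (lp.single 2 j 1) : ∀ _, ℂ) i‖
        ≤ ((β * d) * Real.exp (β * d)) * (C * Real.exp (-β₀ * d)) := by
          exact mul_le_mul h2 (hH0coord i j) (norm_nonneg _) (by positivity)
      _ = β * (C * (d * (Real.exp (β * d) * Real.exp (-β₀ * d)))) := by ring
      _ ≤ β * (C * (d * Real.exp (-(β₀/2) * d))) := by
          have he : Real.exp (β * d) * Real.exp (-β₀ * d) ≤ Real.exp (-(β₀/2) * d) := by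
            rw [← Real.exp_add, Real.exp_le_exp]
            nlinarith [hβle, hd0]
          have := mul_le_mul_of_nonneg_left he hd0
          have := mul_le_mul_of_nonneg_left this hC
          exact mul_le_mul_of_nonneg_left this hβnn
      _ = Fk (i.1 - j.1) := by rw [hFkdef]
  -- Schur bound for B
  have hSchur : ‖B‖ ≤ (Q : ℝ) * ∑' v, Fk v := by
    have hSnn : (0:ℝ) ≤ (Q : ℝ) * ∑' v, Fk v := by
      have : 0 ≤ ∑' v, Fk v := tsum_nonneg hFk0
      positivity
    refine CTaux.schur_test B (fun i j => Fk (i.1 - j.1)) _ hSnn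
      (fun i j => hFk0 _) hBcoord ?_ ?_ ?_ ?_
    · intro i
      have hg : Summable fun γ'' : ℤ × ℤ => Fk (i.1 - γ'') :=
        (Equiv.subLeft i.1).summable_iff.mpr hFksum
      exact (CTaux.summable_fst Q _ (fun v => hFk0 _) hg).1
    · intro i
      have hg : Summable fun γ'' : ℤ × ℤ => Fk (i.1 - γ'') :=
        (Equiv.subLeft i.1).summable_iff.mpr hFksum
      rw [(CTaux.summable_fst Q _ (fun v => hFk0 _) hg).2]
      have := (Equiv.subLeft i.1).tsum_eq Fk
      rw [show (∑' γ'' : ℤ × ℤ, Fk (i.1 - γ'')) = ∑' v, Fk v from this]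
    · intro j
      have hg : Summable fun γ'' : ℤ × ℤ => Fk (γ'' - j.1) :=
        (Equiv.subRight j.1).summable_iff.mpr hFksum
      exact (CTaux.summable_fst Q _ (fun v => hFk0 _) hg).1
    · intro j
      have hg : Summable fun γ'' : ℤ × ℤ => Fk (γ'' - j.1) :=
        (Equiv.subRight j.1).summable_iff.mpr hFksum
      rw [(CTaux.summable_fst Q _ (fun v => hFk0 _) hg).2]
      have := (Equiv.subRight j.1).tsum_eq Fk
      rw [show (∑' γ'' : ℤ × ℤ, Fk (γ'' - j.1)) = ∑' v, Fk v from this]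
  have hFk_tsum : ∑' v, Fk v = β * (C * Sig0) := by
    rw [hFkdef]
    rw [tsum_mul_left]
    congr 1
    rw [tsum_mul_left]
  have hBnorm : ‖B‖ ≤ β * Sigt := by
    refine hSchur.trans ?_
    rw [hFk_tsum, hSigtdef]
    ring_nf
    exact le_refl _
  -- perturbation
  have hone : ‖(1 : MagneticSpace Q →L[ℂ] MagneticSpace Q)‖ ≤ 1 := by
    rw [ContinuousLinearMap.one_def]
    exact ContinuousLinearMap.norm_id_le
  have hb : ‖B‖ * ‖((U⁻¹ : _ˣ) : MagneticSpace Q →L[ℂ] MagneticSpace Q)‖ ≤ 1/2 := by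
    calc ‖B‖ * ‖((U⁻¹ : _ˣ) : MagneticSpace Q →L[ℂ] MagneticSpace Q)‖
        ≤ (β * Sigt) * M :=
          mul_le_mul hBnorm hUinv_norm (norm_nonneg _) (by positivity)
      _ ≤ (1/(2*M)) * M := mul_le_mul_of_nonneg_right hkey (le_of_lt hM0)
      _ = 1/2 := by field_simp
  obtain ⟨P, hPval, hPinv⟩ := CTaux.perturb_unit hone U B hb
  -- conjugation identity
  have hconj : (P : MagneticSpace Q →L[ℂ] MagneticSpace Q) = Wp * u * Wm := by
    have e : Wp * u * Wm = Wp * H₀ * Wm - z • (1 : MagneticSpace Q →L[ℂ] MagneticSpace Q) := by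
      rw [hudef]
      simp only [mul_sub, sub_mul, mul_smul_comm, smul_mul_assoc, mul_one, one_mul, hWpWm]
    rw [hPval, hUval, hBdef, e, hudef]
    abel
  -- identify the conjugated resolvent
  have hPX : (P : MagneticSpace Q →L[ℂ] MagneticSpace Q) * (Wp * R * Wm) = 1 := by
    rw [hconj]
    have h1 : Wm * (Wp * (R * Wm)) = R * Wm := by rw [← mul_assoc, hWmWp, one_mul]
    have h2 : u * (R * Wm) = Wm := by
      rw [← mul_assoc, Ring.mul_inverse_cancel _ hu, one_mul]
    calc Wp * u * Wm * (Wp * R * Wm)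
        = Wp * (u * (Wm * (Wp * (R * Wm)))) := by simp only [mul_assoc]
      _ = Wp * (u * (R * Wm)) := by rw [h1]
      _ = Wp * Wm := by rw [h2]
      _ = 1 := hWpWm
  have hXeq : Wp * R * Wm = ((P⁻¹ : _ˣ) : MagneticSpace Q →L[ℂ] MagneticSpace Q) :=
    Units.eq_inv_of_mul_eq_one_left hPX
  have hXnorm : ‖Wp * R * Wm‖ ≤ 2 * M := by
    rw [hXeq]
    refine hPinv.trans ?_
    linarith [hUinv_norm]
  -- coordinates
  set j0 : (ℤ × ℤ) × Fin Q := (γ', x') with hj0def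
  set i0 : (ℤ × ℤ) × Fin Q := (γ, x) with hi0def
  have hwm_j0 : wm j0 = 1 := by
    have hfj : f j0.1 = 0 := by
      rw [hfdef, hj0def]
      simp only [sub_self, CTaux.znorm_zero]
      exact min_eq_left hn0
    simp only [hwmdef, hfj, mul_zero, neg_zero, Real.exp_zero, Complex.ofReal_one]
  have hwp_i0 : wp i0 = ((Real.exp (β * n) : ℝ) : ℂ) := by
    have hfi : f i0.1 = n := by
      rw [hfdef, hi0def, hndef]
      exact min_self _
    simp only [hwpdef, hfi]
  have hWm_delta : Wm (lp.single 2 j0 1) = lp.single 2 j0 1 := by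
    rw [hWmdef, CTaux.mulOp_single, hwm_j0, one_smul]
  have hXco : ((Wp * R * Wm) (lp.single 2 j0 1) : ∀ _, ℂ) i0
      = ((Real.exp (β * n) : ℝ) : ℂ) * ((R (lp.single 2 j0 1)) : ∀ _, ℂ) i0 := by
    rw [ContinuousLinearMap.mul_apply, ContinuousLinearMap.mul_apply, hWm_delta,
      hWpdef, CTaux.mulOp_apply, hwp_i0]
  -- final estimate
  set v : ℂ := ((R (lp.single 2 j0 1)) : ∀ _, ℂ) i0 with hvdef
  have hdelta_norm : ‖(lp.single 2 j0 (1:ℂ) : lp (fun _ : (ℤ × ℤ) × Fin Q => ℂ) 2)‖ = 1 := by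
    have := lp.norm_single (E := fun _ : (ℤ × ℤ) × Fin Q => ℂ) (p := 2) (by norm_num) j0 (1:ℂ)
    simpa using this
  have hXbound : ‖((Wp * R * Wm) (lp.single 2 j0 1) : ∀ _, ℂ) i0‖ ≤ 2 * M := by
    calc ‖((Wp * R * Wm) (lp.single 2 j0 1) : ∀ _, ℂ) i0‖
        ≤ ‖(Wp * R * Wm) (lp.single 2 j0 1)‖ :=
          lp.norm_apply_le_norm (by norm_num) _ _
      _ ≤ ‖Wp * R * Wm‖ * ‖(lp.single 2 j0 (1:ℂ) : lp (fun _ : (ℤ × ℤ) × Fin Q => ℂ) 2)‖ :=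
          ContinuousLinearMap.le_opNorm _ _
      _ = ‖Wp * R * Wm‖ := by rw [hdelta_norm, mul_one]
      _ ≤ 2 * M := hXnorm
  have hvnorm : ‖v‖ ≤ 2 * M * Real.exp (-β * n) := by
    have h1 : Real.exp (β * n) * ‖v‖ ≤ 2 * M := by
      have hth := hXbound
      rw [hXco, norm_mul] at hth
      have he : ‖((Real.exp (β * n) : ℝ) : ℂ)‖ = Real.exp (β * n) := by
        rw [Complex.norm_real, Real.norm_eq_abs, Real.abs_exp]
      rw [he] at hth
      exact hth
    have h2 : ‖v‖ = Real.exp (-β * n) * (Real.exp (β * n) * ‖v‖) := by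
      rw [← mul_assoc, ← Real.exp_add]
      simp
    rw [h2]
    calc Real.exp (-β * n) * (Real.exp (β * n) * ‖v‖)
        ≤ Real.exp (-β * n) * (2 * M) := by
          exact mul_le_mul_of_nonneg_left h1 (Real.exp_nonneg _)
      _ = 2 * M * Real.exp (-β * n) := by ring
  -- conclude
  rw [CTaux.inner_delta]
  have hRv : (Ring.inverse (H₀ - z • (1 : MagneticSpace Q →L[ℂ] MagneticSpace Q))
      (deltaVec Q γ' x') : ∀ _, ℂ) (γ, x) = v := by
    rw [hvdef, hRdef, hudef]
    rfl
  rw [hRv]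
  exact hvnorm
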